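/- For any nonempty proper subequation F ⊆ Sym²(ℝⁿ), one has F = ∂F + P, where ∂F is the topological boundary of F and P is the positive semidefinite cone. -/

import Mathlib

open Topology Pointwise

abbrev SymMat (n : ℕ) : Type := selfAdjoint (Matrix (Fin n) (Fin n) ℝ)

def PSD (n : ℕ) : Set (SymMat n) := {A | (A : Matrix (Fin n) (Fin n) ℝ).PosSemidef}

def dual {n : ℕ} (F : Set (SymMat n)) : Set (SymMat n) := {A | -A ∉ interior F}

lemma aux_psd {n : ℕ} (C : Matrix (Fin n) (Fin n) ℝ) (hC : C.IsHermitian) {t : ℝ}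
    (ht : ∑ i, ∑ j, |C i j| ≤ t) : (C + t • 1).PosSemidef := by
  rw [Matrix.posSemidef_iff_dotProduct_mulVec]
  constructor
  · unfold Matrix.IsHermitian at *
    simp only [Matrix.conjTranspose_eq_transpose_of_trivial] at hC ⊢
    simp [hC]
  · intro x
    set S := ∑ k, x k ^ 2 with hS
    have hSnn : 0 ≤ S := Finset.sum_nonneg fun k _ => sq_nonneg _
    have hk : ∀ i, x i ^ 2 ≤ S := fun i =>
      Finset.single_le_sum (fun k _ => sq_nonneg (x k)) (Finset.mem_univ i)
    have key : ∀ i j, -(|C i j| * S) ≤ x i * (C i j * x j) := by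
      intro i j
      have h1 : |x i * x j| ≤ S := by
        rw [abs_mul]
        nlinarith [sq_nonneg (|x i| - |x j|), sq_abs (x i), sq_abs (x j), hk i, hk j]
      have h2 : |x i * (C i j * x j)| = |C i j| * |x i * x j| := by
        rw [abs_mul, abs_mul, abs_mul]; ring
      have h3 := neg_abs_le (x i * (C i j * x j))
      nlinarith [abs_nonneg (C i j)]
    have quad : -((∑ i, ∑ j, |C i j|) * S) ≤ ∑ i, ∑ j, x i * (C i j * x j) := by
      have h4 : ∑ i, ∑ j, (-(|C i j| * S)) = -((∑ i, ∑ j, |C i j|) * S) := by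
        simp [Finset.sum_mul]
      rw [← h4]
      exact Finset.sum_le_sum fun i _ => Finset.sum_le_sum fun j _ => key i j
    have hdq : dotProduct (star x) ((C + t • 1).mulVec x)
        = (∑ i, ∑ j, x i * (C i j * x j)) + t * S := by
      simp [Matrix.add_mulVec, Matrix.smul_mulVec, Matrix.one_mulVec,
        dotProduct_add, dotProduct_smul, dotProduct, Matrix.mulVec,
        Finset.mul_sum, hS, smul_eq_mul, sq, Finset.sum_add_distrib]
      rw [← Finset.sum_add_distrib]
      refine Finset.sum_congr rfl fun a _ => ?_
      rw [add_comm]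
      simp [mul_add, add_mul, Finset.sum_add_distrib, Matrix.one_apply, mul_ite, ite_mul,
        Finset.sum_ite_eq', Finset.mem_univ, mul_comm, mul_left_comm]
      ring
    rw [hdq]
    have h5 : (∑ i, ∑ j, |C i j|) * S ≤ t * S := mul_le_mul_of_nonneg_right ht hSnn
    linarith

noncomputable def matOne (n : ℕ) : SymMat n := ⟨1, IsSelfAdjoint.one _⟩

lemma psd_smul_one {n : ℕ} {t : ℝ} (htn : 0 ≤ t) : t • matOne n ∈ PSD n := by
  have h := aux_psd (0 : Matrix (Fin n) (Fin n) ℝ) (by simp [Matrix.IsHermitian]) (t := t)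
    (by simp [htn])
  simpa [PSD, matOne] using h

theorem stmt5 (n : ℕ) (F : Set (SymMat n)) (hcl : IsClosed F)
    (hpos : F + PSD n ⊆ F) (hne : F.Nonempty) (hproper : F ≠ Set.univ) :
    F = frontier F + PSD n := by
  apply Set.Subset.antisymm
  · intro A hA
    obtain ⟨B, hB⟩ : ∃ B, B ∉ F := by
      by_contra h
      push_neg at h
      exact hproper (Set.eq_univ_of_forall h)
    set g : ℝ → SymMat n := fun t => A - t • matOne n with hg
    have hgc : Continuous g := by
      apply Continuous.subtype_mk
      show Continuous fun t : ℝ => ((A : Matrix (Fin n) (Fin n) ℝ) - t • (1 : Matrix (Fin n) (Fin n) ℝ))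
      fun_prop
    set S : Set ℝ := {t | 0 ≤ t ∧ g t ∈ F} with hSdef
    have hSclosed : IsClosed S := by
      have : S = (Set.Ici 0) ∩ g ⁻¹' F := by ext t; simp [hSdef, Set.mem_Ici]
      rw [this]
      exact isClosed_Ici.inter (hcl.preimage hgc)
    have h0S : (0 : ℝ) ∈ S := ⟨le_refl 0, by simpa [hg] using hA⟩
    have hbdd : BddAbove S := by
      set tB : ℝ := ∑ i, ∑ j, |((B : Matrix (Fin n) (Fin n) ℝ) - A) i j| with htB
      refine ⟨tB, fun t ht => ?_⟩
      by_contra hlt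
      push_neg at hlt
      apply hB
      have hpsd : (B - g t) ∈ PSD n := by
        show ((B - g t : SymMat n) : Matrix (Fin n) (Fin n) ℝ).PosSemidef
        have hco : ((B - g t : SymMat n) : Matrix (Fin n) (Fin n) ℝ)
            = ((B : Matrix (Fin n) (Fin n) ℝ) - A) + t • 1 := by
          simp [hg]
          abel
        rw [hco]
        apply aux_psd
        · have := (B - A : SymMat n).property
          rw [Matrix.IsHermitian]
          rw [← Matrix.star_eq_conjTranspose]
          simpa using this
        · exact le_of_lt hlt
      have : g t + (B - g t) ∈ F + PSD n := Set.add_mem_add ht.2 hpsd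
      simpa using hpos this
    set t0 : ℝ := sSup S with ht0def
    have ht0S : t0 ∈ S := hSclosed.csSup_mem ⟨0, h0S⟩ hbdd
    have hfr : g t0 ∈ frontier F := by
      rw [hcl.frontier_eq]
      refine ⟨ht0S.2, fun hint => ?_⟩
      have hU : IsOpen (g ⁻¹' interior F) := isOpen_interior.preimage hgc
      obtain ⟨ε, hε, hball⟩ := Metric.isOpen_iff.mp hU t0 hint
      have hmem : t0 + ε / 2 ∈ g ⁻¹' interior F := by
        apply hball
        simp [Real.dist_eq, abs_of_nonneg, hε.le]
        linarith
      have : t0 + ε / 2 ∈ S := ⟨by linarith [ht0S.1], interior_subset hmem⟩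
      have := le_csSup hbdd this
      linarith
    refine ⟨g t0, hfr, t0 • matOne n, psd_smul_one ht0S.1, ?_⟩
    simp [hg]
  · intro A hA
    obtain ⟨x, hx, y, hy, rfl⟩ := hA
    exact hpos (Set.add_mem_add (hcl.frontier_subset hx) hy)
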